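/- Let f : ℝⁿ → ℝ be convex, differentiable, and L-smooth with L > 0, and let x⋆ be a global minimizer of f. Let {x^k}, {y^k}, {t_k}, {f̂^k} be generated by the accelerated proximal bundle method (APBM) with models f̂^k satisfying Assumption 1. Write v^k = f(x^k) − f(x⋆) and u^k = x⋆ + (t_k − 1)x^{k−1} − t_k x^k. Then for every k ≥ 1, t_{k+1}² v^{k+1} − t_k² v^k ≤ (L/2)‖u^k‖² − (L/2)‖u^{k+1}‖². -/

import Mathlib

open scoped RealInnerProductSpace

section APBMAux

variable {n : ℕ}

private lemma apbm_line_deriv (f : EuclideanSpace ℝ (Fin n) → ℝ)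
    (hdiff : Differentiable ℝ f) (a d : EuclideanSpace ℝ (Fin n)) (s : ℝ) :
    HasDerivAt (fun s : ℝ => f (a + s • d)) ⟪gradient f (a + s • d), d⟫ s := by
  have hγ : HasDerivAt (fun s : ℝ => a + s • d) d s := by
    simpa using ((hasDerivAt_id s).smul_const d).const_add a
  have hf := (hdiff (a + s • d)).hasGradientAt.hasFDerivAt
  have := hf.comp_hasDerivAt s hγ
  simp only [InnerProductSpace.toDual_apply_apply] at this
  exact this

private lemma apbm_descent {L : ℝ} (f : EuclideanSpace ℝ (Fin n) → ℝ)
    (hdiff : Differentiable ℝ f)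
    (hsmooth : ∀ u v, ‖gradient f u - gradient f v‖ ≤ L * ‖u - v‖)
    (a b : EuclideanSpace ℝ (Fin n)) :
    f b ≤ f a + ⟪gradient f a, b - a⟫ + L / 2 * ‖b - a‖ ^ 2 := by
  set d := b - a with hd
  set g : ℝ → ℝ := fun s =>
    f (a + s • d) - s * ⟪gradient f a, d⟫ - L / 2 * s ^ 2 * ‖d‖ ^ 2 with hg
  have hg' : ∀ s : ℝ, HasDerivAt g
      (⟪gradient f (a + s • d), d⟫ - ⟪gradient f a, d⟫ - L * s * ‖d‖ ^ 2) s := by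
    intro s
    have h1 := apbm_line_deriv f hdiff a d s
    have h2 : HasDerivAt (fun s : ℝ => s * ⟪gradient f a, d⟫) ⟪gradient f a, d⟫ s := by
      simpa using (hasDerivAt_id s).mul_const (⟪gradient f a, d⟫)
    have h3 : HasDerivAt (fun s : ℝ => L / 2 * s ^ 2 * ‖d‖ ^ 2) (L * s * ‖d‖ ^ 2) s := by
      have := ((hasDerivAt_pow 2 s).const_mul (L / 2)).mul_const (‖d‖ ^ 2)
      exact this.congr_deriv (by ring)
    exact (h1.sub h2).sub h3
  have hanti : AntitoneOn g (Set.Icc (0:ℝ) 1) := by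
    apply antitoneOn_of_deriv_nonpos (convex_Icc 0 1)
    · exact fun s _ => ((hg' s).differentiableAt.continuousAt).continuousWithinAt
    · exact fun s _ => (hg' s).differentiableAt.differentiableWithinAt
    · intro s hs
      rw [interior_Icc] at hs
      rw [(hg' s).deriv]
      have h1 : ⟪gradient f (a + s • d) - gradient f a, d⟫ ≤ L * s * ‖d‖ ^ 2 := by
        calc ⟪gradient f (a + s • d) - gradient f a, d⟫
            ≤ ‖gradient f (a + s • d) - gradient f a‖ * ‖d‖ := real_inner_le_norm _ _
          _ ≤ (L * ‖(a + s • d) - a‖) * ‖d‖ := by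
              gcongr
              exact hsmooth _ _
          _ = L * s * ‖d‖ ^ 2 := by
              rw [add_sub_cancel_left, norm_smul, Real.norm_eq_abs, abs_of_pos hs.1]
              ring
      have h2 : ⟪gradient f (a + s • d), d⟫ - ⟪gradient f a, d⟫
          = ⟪gradient f (a + s • d) - gradient f a, d⟫ := (inner_sub_left _ _ _).symm
      linarith
  have key : g 1 ≤ g 0 := hanti (Set.mem_Icc.mpr ⟨le_refl 0, zero_le_one⟩)
    (Set.mem_Icc.mpr ⟨zero_le_one, le_refl 1⟩) zero_le_one
  simp only [hg, one_smul, zero_smul, add_zero] at key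
  have hb : a + d = b := by rw [hd]; abel
  rw [hb] at key
  nlinarith [key]

private lemma apbm_min_strong {L : ℝ} (hL : 0 < L) (fh : EuclideanSpace ℝ (Fin n) → ℝ)
    (hconv : ConvexOn ℝ Set.univ fh) (yk xk : EuclideanSpace ℝ (Fin n))
    (hxmin : ∀ z, fh xk + L / 2 * ‖xk - yk‖ ^ 2 ≤ fh z + L / 2 * ‖z - yk‖ ^ 2)
    (z : EuclideanSpace ℝ (Fin n)) :
    fh xk ≤ fh z + L * ⟪xk - yk, z - xk⟫ := by
  refine le_of_forall_pos_le_add fun ε hε => ?_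
  set D : ℝ := L / 2 * ‖z - xk‖ ^ 2 + ε with hD
  have hDpos : 0 < D := by positivity
  set θ : ℝ := min 1 (ε / D) with hθ
  have hθpos : 0 < θ := lt_min one_pos (by positivity)
  have hθ1 : θ ≤ 1 := min_le_left _ _
  have hcomb : fh ((1 - θ) • xk + θ • z) ≤ (1 - θ) * fh xk + θ * fh z :=
    hconv.2 (Set.mem_univ xk) (Set.mem_univ z) (by linarith) (le_of_lt hθpos) (by ring)
  have hpt : (1 - θ) • xk + θ • z = xk + θ • (z - xk) := by module
  rw [hpt] at hcomb
  have hmin' := hxmin (xk + θ • (z - xk))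
  have hnorm : ‖xk + θ • (z - xk) - yk‖ ^ 2
      = ‖xk - yk‖ ^ 2 + 2 * θ * ⟪xk - yk, z - xk⟫ + θ ^ 2 * ‖z - xk‖ ^ 2 := by
    have h1 : xk + θ • (z - xk) - yk = (xk - yk) + θ • (z - xk) := by abel
    rw [h1, norm_add_sq_real, real_inner_smul_right, norm_smul, Real.norm_eq_abs,
      mul_pow, sq_abs]
    ring
  rw [hnorm] at hmin'
  have h6 : θ * fh xk ≤ θ * (fh z + L * ⟪xk - yk, z - xk⟫ + L / 2 * θ * ‖z - xk‖ ^ 2) := by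
    nlinarith [hmin', hcomb]
  have h7 : fh xk ≤ fh z + L * ⟪xk - yk, z - xk⟫ + L / 2 * θ * ‖z - xk‖ ^ 2 :=
    le_of_mul_le_mul_left h6 hθpos
  have hE : (0:ℝ) ≤ L / 2 * ‖z - xk‖ ^ 2 := by positivity
  have h8 : L / 2 * θ * ‖z - xk‖ ^ 2 ≤ ε := by
    have h1 : θ * (L / 2 * ‖z - xk‖ ^ 2) ≤ ε / D * (L / 2 * ‖z - xk‖ ^ 2) :=
      mul_le_mul_of_nonneg_right (min_le_right _ _) hE
    have h2 : ε / D * (L / 2 * ‖z - xk‖ ^ 2) ≤ ε / D * D :=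
      mul_le_mul_of_nonneg_left (by rw [hD]; linarith) (by positivity)
    have h3 : ε / D * D = ε := div_mul_cancel₀ _ hDpos.ne'
    linarith
  linarith

/-- The key per-iteration inequality `f(x^k) ≤ f(z) + (L/2)(‖z−y^k‖² − ‖z−x^k‖²)`. -/
private lemma apbm_key {L : ℝ} (hL : 0 < L) (f fh : EuclideanSpace ℝ (Fin n) → ℝ)
    (hdiff : Differentiable ℝ f)
    (hsmooth : ∀ u v, ‖gradient f u - gradient f v‖ ≤ L * ‖u - v‖)
    (hconv : ConvexOn ℝ Set.univ fh) (yk xk : EuclideanSpace ℝ (Fin n))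
    (hlow : ∀ z, f yk + ⟪gradient f yk, z - yk⟫ ≤ fh z)
    (hupp : ∀ z, fh z ≤ f z)
    (hxmin : ∀ z, fh xk + L / 2 * ‖xk - yk‖ ^ 2 ≤ fh z + L / 2 * ‖z - yk‖ ^ 2)
    (z : EuclideanSpace ℝ (Fin n)) :
    f xk ≤ f z + L / 2 * ‖z - yk‖ ^ 2 - L / 2 * ‖z - xk‖ ^ 2 := by
  have h1 : f xk ≤ fh xk + L / 2 * ‖xk - yk‖ ^ 2 := by
    have := apbm_descent f hdiff hsmooth yk xk
    have := hlow xk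
    linarith
  have h2 : fh xk ≤ fh z + L * ⟪xk - yk, z - xk⟫ :=
    apbm_min_strong hL fh hconv yk xk hxmin z
  have h3 : fh z ≤ f z := hupp z
  have h4 : ‖z - yk‖ ^ 2 - ‖z - xk‖ ^ 2
      = ‖xk - yk‖ ^ 2 + 2 * ⟪xk - yk, z - xk⟫ := by
    have h5 : z - yk = (xk - yk) + (z - xk) := by abel
    rw [h5, norm_add_sq_real]
    ring
  nlinarith [h1, h2, h3, h4]

private lemma apbm_norm_iden (a : ℝ) (s p Y q : EuclideanSpace ℝ (Fin n)) :
    a * (a - 1) * (‖p - Y‖ ^ 2 - ‖p - q‖ ^ 2) + a * (‖s - Y‖ ^ 2 - ‖s - q‖ ^ 2)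
      = ‖s + (a - 1) • p - a • Y‖ ^ 2 - ‖s + (a - 1) • p - a • q‖ ^ 2 := by
  simp only [← real_inner_self_eq_norm_sq, inner_sub_left, inner_sub_right,
    inner_add_left, inner_add_right, real_inner_smul_left, real_inner_smul_right]
  rw [real_inner_comm p s, real_inner_comm Y s, real_inner_comm q s,
    real_inner_comm Y p, real_inner_comm q p]
  ring

end APBMAux

set_option maxHeartbeats 1000000 in
/-- Key telescoping inequality in the proof of Theorem 1:
`t_{k+1}² v^{k+1} − t_k² v^k ≤ (L/2)‖u^k‖² − (L/2)‖u^{k+1}‖²`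
where `v^k = f(x^k) − f(x⋆)` and `u^k = x⋆ + (t_k − 1)x^{k−1} − t_k x^k`. -/
theorem apbm_telescoping {n : ℕ} {L : ℝ} (hL : 0 < L)
    (f : EuclideanSpace ℝ (Fin n) → ℝ)
    (hconv : ConvexOn ℝ Set.univ f)
    (hdiff : Differentiable ℝ f)
    (hsmooth : ∀ u v, ‖gradient f u - gradient f v‖ ≤ L * ‖u - v‖)
    (xstar : EuclideanSpace ℝ (Fin n)) (hmin : ∀ z, f xstar ≤ f z)
    (x y : ℕ → EuclideanSpace ℝ (Fin n)) (t : ℕ → ℝ)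
    (fhat : ℕ → EuclideanSpace ℝ (Fin n) → ℝ)
    (ht1 : t 1 = 1)
    (htrec : ∀ k ≥ 1, t (k + 1) = (1 + Real.sqrt (1 + 4 * t k ^ 2)) / 2)
    (hy1 : y 1 = x 0)
    (hxmin : ∀ k ≥ 1, ∀ z,
      fhat k (x k) + L / 2 * ‖x k - y k‖ ^ 2 ≤ fhat k z + L / 2 * ‖z - y k‖ ^ 2)
    (hyrec : ∀ k ≥ 1, y (k + 1) = x k + ((t k - 1) / t (k + 1)) • (x k - x (k - 1)))
    (hmodel_convex : ∀ k ≥ 1, ConvexOn ℝ Set.univ (fhat k))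
    (hmodel_lower : ∀ k ≥ 1, ∀ z,
      f (y k) + ⟪gradient f (y k), z - y k⟫ ≤ fhat k z)
    (hmodel_upper : ∀ k ≥ 1, ∀ z, fhat k z ≤ f z) :
    ∀ k ≥ 1,
      t (k + 1) ^ 2 * (f (x (k + 1)) - f xstar) - t k ^ 2 * (f (x k) - f xstar) ≤
        L / 2 * ‖xstar + (t k - 1) • x (k - 1) - t k • x k‖ ^ 2 -
          L / 2 * ‖xstar + (t (k + 1) - 1) • x k - t (k + 1) • x (k + 1)‖ ^ 2 := by
  intro k hk
  set a := t (k + 1) with ha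
  -- basic facts about t
  have hsq : (0:ℝ) ≤ 1 + 4 * t k ^ 2 := by positivity
  have hsqrt1 : (1:ℝ) ≤ Real.sqrt (1 + 4 * t k ^ 2) := by
    have h := Real.sqrt_le_sqrt (show (1:ℝ) ≤ 1 + 4 * t k ^ 2 by nlinarith)
    simpa using h
  have ha1 : 1 ≤ a := by
    rw [ha, htrec k hk]; linarith
  have hane : a ≠ 0 := by linarith
  have htk2 : t k ^ 2 = a ^ 2 - a := by
    have h1 : a = (1 + Real.sqrt (1 + 4 * t k ^ 2)) / 2 := by rw [ha, htrec k hk]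
    have h2 : (2 * a - 1) = Real.sqrt (1 + 4 * t k ^ 2) := by rw [h1]; ring
    have h3 : (2 * a - 1) ^ 2 = 1 + 4 * t k ^ 2 := by
      rw [h2, Real.sq_sqrt hsq]
    nlinarith
  -- key inequality at index k+1
  have hkey := apbm_key hL f (fhat (k + 1)) hdiff hsmooth
    (hmodel_convex (k + 1) (by omega)) (y (k + 1)) (x (k + 1))
    (hmodel_lower (k + 1) (by omega)) (hmodel_upper (k + 1) (by omega))
    (hxmin (k + 1) (by omega))
  have P1 := hkey (x k)
  have P2 := hkey xstar
  -- rewrite u^k in terms of y^(k+1)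
  have hY : a • y (k + 1) = a • x k + (t k - 1) • (x k - x (k - 1)) := by
    rw [hyrec k hk, smul_add, smul_smul, mul_div_cancel₀ _ hane]
  have hu : xstar + (a - 1) • x k - a • y (k + 1)
      = xstar + (t k - 1) • x (k - 1) - t k • x k := by
    rw [hY]
    have h1 : t k • x k = (t k - 1) • x k + x k := by
      rw [sub_smul, one_smul]; abel
    rw [h1, smul_sub, sub_smul, one_smul]
    abel
  have hiden := apbm_norm_iden a xstar (x k) (y (k + 1)) (x (k + 1))
  rw [hu] at hiden
  have hidenc := congrArg (fun r => L / 2 * r) hiden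
  -- multiplied inequalities
  have hfact : (0:ℝ) ≤ a * (a - 1) := by nlinarith
  have h4 : a * (a - 1) * (f (x (k + 1)) - f (x k))
      ≤ a * (a - 1) * (L / 2 * ‖x k - y (k + 1)‖ ^ 2 - L / 2 * ‖x k - x (k + 1)‖ ^ 2) :=
    mul_le_mul_of_nonneg_left (by linarith) hfact
  have h5 : a * (f (x (k + 1)) - f xstar)
      ≤ a * (L / 2 * ‖xstar - y (k + 1)‖ ^ 2 - L / 2 * ‖xstar - x (k + 1)‖ ^ 2) :=
    mul_le_mul_of_nonneg_left (by linarith) (by linarith)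
  rw [htk2]
  linarith [h4, h5, hidenc]
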